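/- arXiv:1904.03432 — 3 statements merged into one kernel-verified Lean document; each statement's English description precedes it below -/
import Mathlib

section
/- For every τ in the upper half-plane with Im τ ≥ √3/2, one has |(E₄(τ) − 1)/q| < 252, where q = e^{2πiτ}. -/
open Complex

noncomputable section

/-- `sigma' k n = ∑_{d ∣ n} d^k`, the sum of the k-th powers of the positive divisors of n. -/
def sigma' (k n : ℕ) : ℕ := ∑ d ∈ n.divisors, d ^ k

/-- `qpar τ = e^{2πiτ}`. -/
def qpar (τ : ℂ) : ℂ := Complex.exp (2 * Real.pi * Complex.I * τ)

/-- The quasimodular Eisenstein series `E₂(τ) = 1 - 24 ∑_{n≥1} σ₁(n) qⁿ`. -/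
def E2 (τ : ℂ) : ℂ := 1 - 24 * ∑' n : ℕ, (sigma' 1 (n + 1) : ℂ) * qpar τ ^ (n + 1)

/-- The Eisenstein series `E₄(τ) = 1 + 240 ∑_{n≥1} σ₃(n) qⁿ`. -/
def E4 (τ : ℂ) : ℂ := 1 + 240 * ∑' n : ℕ, (sigma' 3 (n + 1) : ℂ) * qpar τ ^ (n + 1)

/-- The Eisenstein series `E₆(τ) = 1 - 504 ∑_{n≥1} σ₅(n) qⁿ`. -/
def E6 (τ : ℂ) : ℂ := 1 - 504 * ∑' n : ℕ, (sigma' 5 (n + 1) : ℂ) * qpar τ ^ (n + 1)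

/-- The modular discriminant `Δ = (E₄³ - E₆²)/1728`. -/
def Δ' (τ : ℂ) : ℂ := (E4 τ ^ 3 - E6 τ ^ 2) / 1728

/-- The modular j-invariant `j = E₄³/Δ`. -/
def jinv (τ : ℂ) : ℂ := E4 τ ^ 3 / Δ' τ

/-- `χ = E₂E₄E₆/Δ`. -/
def χ' (τ : ℂ) : ℂ := E2 τ * E4 τ * E6 τ / Δ' τ

/-- `ξ = E₄E₆/Δ`. -/
def ξ' (τ : ℂ) : ℂ := E4 τ * E6 τ / Δ' τ

/-- The almost holomorphic modular function `χ*(τ) = χ(τ) - (3/(π Im τ)) ξ(τ)`. -/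
def χstar (τ : ℂ) : ℂ := χ' τ - (3 / (Real.pi * τ.im) : ℝ) * ξ' τ

/-- `τ` lies in the upper half-plane and satisfies `aτ² + bτ + c = 0` where
`a > 0` and `gcd(a,b,c) = 1`. -/
def QuadPoint (τ : ℂ) (a b c : ℤ) : Prop :=
  0 < τ.im ∧ 0 < a ∧ Int.gcd (Int.gcd a b) c = 1 ∧
    (a : ℂ) * τ ^ 2 + (b : ℂ) * τ + (c : ℂ) = 0

/-- `τ` is a quadratic point of the upper half-plane. -/
def IsQuadratic (τ : ℂ) : Prop := ∃ a b c : ℤ, QuadPoint τ a b c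

/-- `τ` is a quadratic point of discriminant `D = b² - 4ac`. -/
def HasDisc (τ : ℂ) (D : ℤ) : Prop :=
  ∃ a b c : ℤ, QuadPoint τ a b c ∧ D = b ^ 2 - 4 * a * c

/-- Membership in the closed standard fundamental domain
`F = {z ∈ ℍ : |z| ≥ 1, -1/2 ≤ Re z ≤ 1/2}`. -/
def inF (τ : ℂ) : Prop :=
  0 < τ.im ∧ 1 ≤ ‖τ‖ ∧ -(1 / 2) ≤ τ.re ∧ τ.re ≤ 1 / 2

/-- `τ` and `τ'` lie in the same `SL₂(ℤ)`-orbit under Möbius transformations. -/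
def MoebiusEquiv (τ τ' : ℂ) : Prop :=
  ∃ γ : Matrix.SpecialLinearGroup (Fin 2) ℤ,
    τ' = ((γ.1 0 0 : ℂ) * τ + (γ.1 0 1 : ℂ)) / ((γ.1 1 0 : ℂ) * τ + (γ.1 1 1 : ℂ))

lemma sigma'_le (m : ℕ) : sigma' 3 m ≤ m ^ 4 := by
  rcases Nat.eq_zero_or_pos m with rfl | hm
  · simp [sigma']
  · have hsub : m.divisors ⊆ Finset.Icc 1 m := fun d hd => by
      rw [Finset.mem_Icc]
      exact ⟨Nat.pos_of_mem_divisors hd, Nat.divisor_le hd⟩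
    calc sigma' 3 m ≤ ∑ d ∈ m.divisors, m ^ 3 :=
          Finset.sum_le_sum fun d hd => Nat.pow_le_pow_left (Nat.divisor_le hd) 3
      _ = m.divisors.card * m ^ 3 := by rw [Finset.sum_const, smul_eq_mul]
      _ ≤ m * m ^ 3 := by
          gcongr
          calc m.divisors.card ≤ (Finset.Icc 1 m).card := Finset.card_le_card hsub
            _ = m := by simp
      _ = m ^ 4 := by ring

lemma sigma'_one : sigma' 3 1 = 1 := by simp [sigma']
lemma sigma'_two : sigma' 3 2 = 9 := by rw [sigma', show Nat.divisors 2 = {1, 2} by rfl]; rfl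

lemma pow4_le_16pow (n : ℕ) : (n + 1) ^ 4 ≤ 16 ^ n := by
  calc (n + 1) ^ 4 ≤ (2 ^ n) ^ 4 := Nat.pow_le_pow_left (Nat.lt_two_pow_self (n := n)) 4
    _ = 16 ^ n := by rw [← Nat.pow_mul, Nat.mul_comm, Nat.pow_mul]

lemma pow4_le' (n : ℕ) : (n + 3) ^ 4 ≤ 96 * 6 ^ n := by
  induction n with
  | zero => norm_num
  | succ k ih =>
    have h1 : 3 * (k + 4) ≤ 4 * (k + 3) := by omega
    have h2 : (3 * (k + 4)) ^ 4 ≤ (4 * (k + 3)) ^ 4 := Nat.pow_le_pow_left h1 4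
    rw [mul_pow, mul_pow] at h2
    norm_num at h2
    have h3 : (k + 4) ^ 4 ≤ 6 * (k + 3) ^ 4 := by omega
    calc (k + 1 + 3) ^ 4 = (k + 4) ^ 4 := by ring_nf
      _ ≤ 6 * (k + 3) ^ 4 := h3
      _ ≤ 6 * (96 * 6 ^ k) := by omega
      _ = 96 * 6 ^ (k + 1) := by ring


/-- For `Im τ ≥ √3/2`, `|(E₄(τ) - 1)/q| < 252`. -/
theorem E4_tail_bound (τ : ℂ) (hτ : Real.sqrt 3 / 2 ≤ τ.im) :
    ‖(E4 τ - 1) / qpar τ‖ < 252 := by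
  set q : ℂ := qpar τ with hqdef
  set r : ℝ := ‖q‖ with hrdef
  have hrpos : 0 < r := norm_pos_iff.mpr (Complex.exp_ne_zero _)
  -- r ≤ 1/200
  have hrabs : r = Real.exp (-(2 * Real.pi * τ.im)) := by
    rw [hrdef, hqdef]
    unfold qpar
    rw [Complex.norm_exp]
    congr 1
    simp [Complex.mul_re, Complex.mul_im]
  have hr200 : r ≤ 1 / 200 := by
    have hs : (1.732 : ℝ) ≤ Real.sqrt 3 := by
      nlinarith [Real.sq_sqrt (show (0:ℝ) ≤ 3 by norm_num), Real.sqrt_nonneg 3]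
    have hpi := Real.pi_gt_d6
    have h1 : (5.43 : ℝ) ≤ Real.pi * Real.sqrt 3 := by nlinarith [Real.sqrt_nonneg 3]
    have h2 : (200 : ℝ) ≤ Real.exp 5.43 := by
      have e5 : Real.exp (5.43 : ℝ) = Real.exp 1 ^ 5 * Real.exp 0.43 := by
        rw [← Real.exp_nat_mul, ← Real.exp_add]; norm_num
      have h43 : (1.43 : ℝ) ≤ Real.exp 0.43 := by
        have := Real.add_one_le_exp (0.43 : ℝ); linarith
      have hp : ((2.7182818283:ℝ)) ^ 5 ≤ Real.exp 1 ^ 5 :=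
        pow_le_pow_left₀ (by norm_num) Real.exp_one_gt_d9.le 5
      have hp2 : (148.41 : ℝ) ≤ (2.7182818283:ℝ) ^ 5 := by norm_num
      nlinarith [Real.exp_pos (0.43:ℝ)]
    have h3 : (200 : ℝ) ≤ Real.exp (Real.pi * Real.sqrt 3) := by
      refine h2.trans (Real.exp_le_exp.mpr ?_)
      nlinarith [Real.pi_pos]
    have h4 : Real.exp (-(2 * Real.pi * τ.im)) ≤ Real.exp (-(Real.pi * Real.sqrt 3)) := by
      apply Real.exp_le_exp.mpr
      nlinarith [Real.pi_pos]
    rw [hrabs]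
    refine h4.trans ?_
    rw [Real.exp_neg, inv_le_comm₀ (Real.exp_pos _) (by norm_num)]
    linarith
  have h6r : 6 * r < 1 := by linarith
  have h16r : 16 * r < 1 := by linarith
  -- real term function
  set g : ℕ → ℝ := fun n => (sigma' 3 (n + 1) : ℝ) * r ^ (n + 1) with hgdef
  have hgnonneg : ∀ n, 0 ≤ g n := fun n => by positivity
  have hgle : ∀ n, g n ≤ r * (16 * r) ^ n := by
    intro n
    have h1 : (sigma' 3 (n + 1) : ℝ) ≤ ((n + 1 : ℕ) : ℝ) ^ 4 := by
      exact_mod_cast (sigma'_le (n + 1)).trans (le_of_eq rfl)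
    have h2 : ((n + 1 : ℕ) : ℝ) ^ 4 ≤ (16 : ℝ) ^ n := by
      exact_mod_cast pow4_le_16pow n
    calc g n ≤ (16 : ℝ) ^ n * r ^ (n + 1) := by
          refine mul_le_mul (h1.trans h2) le_rfl (by positivity) (by positivity)
      _ = r * (16 * r) ^ n := by rw [mul_pow]; ring
  have hgeo : Summable (fun n : ℕ => r * (16 * r) ^ n) :=
    (summable_geometric_of_lt_one (by positivity) h16r).mul_left r
  have hgsum : Summable g := Summable.of_nonneg_of_le hgnonneg hgle hgeo
  -- complex summability
  have hnorm : ∀ n : ℕ, ‖(sigma' 3 (n + 1) : ℂ) * q ^ (n + 1)‖ = g n := by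
    intro n
    simp [hgdef, norm_mul, norm_pow, Complex.norm_natCast, hrdef]
  have hcsum : Summable (fun n : ℕ => (sigma' 3 (n + 1) : ℂ) * q ^ (n + 1)) := by
    apply Summable.of_norm
    simpa only [hnorm] using hgsum
  -- bound on tsum of g
  have hT2sum : Summable (fun n : ℕ => g (n + 2)) := (summable_nat_add_iff 2).mpr hgsum
  have hT1sum : Summable (fun n : ℕ => g (n + 1)) := (summable_nat_add_iff 1).mpr hgsum
  have hgeo2 : Summable (fun n : ℕ => 96 * r ^ 3 * (6 * r) ^ n) :=
    (summable_geometric_of_lt_one (by positivity) h6r).mul_left _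
  have hT2le : ∑' n : ℕ, g (n + 2) ≤ 96 * r ^ 3 * (1 - 6 * r)⁻¹ := by
    have hle2 : ∀ n : ℕ, g (n + 2) ≤ 96 * r ^ 3 * (6 * r) ^ n := by
      intro n
      have h1 : (sigma' 3 (n + 3) : ℝ) ≤ ((n + 3 : ℕ) : ℝ) ^ 4 := by
        exact_mod_cast sigma'_le (n + 3)
      have h2 : ((n + 3 : ℕ) : ℝ) ^ 4 ≤ 96 * (6 : ℝ) ^ n := by exact_mod_cast pow4_le' n
      have : g (n + 2) = (sigma' 3 (n + 3) : ℝ) * r ^ (n + 3) := by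
        simp [hgdef]
      rw [this]
      calc (sigma' 3 (n + 3) : ℝ) * r ^ (n + 3)
          ≤ 96 * (6:ℝ) ^ n * r ^ (n + 3) := by
            refine mul_le_mul (h1.trans h2) le_rfl (by positivity) (by positivity)
        _ = 96 * r ^ 3 * (6 * r) ^ n := by rw [mul_pow]; ring
    calc ∑' n : ℕ, g (n + 2) ≤ ∑' n : ℕ, 96 * r ^ 3 * (6 * r) ^ n :=
          Summable.tsum_le_tsum hle2 hT2sum hgeo2
      _ = 96 * r ^ 3 * (1 - 6 * r)⁻¹ := by
          rw [tsum_mul_left, tsum_geometric_of_lt_one (by positivity) h6r]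
  have hTsplit : ∑' n, g n = g 0 + (g 1 + ∑' n : ℕ, g (n + 2)) := by
    rw [Summable.tsum_eq_zero_add hgsum, Summable.tsum_eq_zero_add hT1sum]
  have hg0 : g 0 = r := by simp [hgdef, sigma'_one]
  have hg1 : g 1 = 9 * r ^ 2 := by
    simp [hgdef, sigma'_two]
  have hTle : ∑' n, g n ≤ r + 9 * r ^ 2 + 96 * r ^ 3 * (1 - 6 * r)⁻¹ := by
    rw [hTsplit, hg0, hg1]; linarith
  -- assemble
  have hE4 : E4 τ - 1 = 240 * ∑' n : ℕ, (sigma' 3 (n + 1) : ℂ) * q ^ (n + 1) := by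
    rw [E4, ← hqdef]; ring
  have hSbound : ‖∑' n : ℕ, (sigma' 3 (n + 1) : ℂ) * q ^ (n + 1)‖ ≤ ∑' n, g n := by
    have := norm_tsum_le_tsum_norm (f := fun n : ℕ => (sigma' 3 (n + 1) : ℂ) * q ^ (n + 1))
      (by simpa only [hnorm] using hgsum)
    simpa only [hnorm] using this
  rw [hE4, norm_div, norm_mul]
  rw [div_lt_iff₀ hrpos]
  have habs240 : ‖(240 : ℂ)‖ = 240 := by norm_num
  rw [habs240]
  have hw : (1 - 6 * r) * (1 - 6 * r)⁻¹ = 1 := mul_inv_cancel₀ (by linarith)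
  have hwle : (1 - 6 * r)⁻¹ ≤ 2 := by
    rw [inv_le_comm₀ (by linarith) (by norm_num)]; linarith
  have hwpos : 0 < (1 - 6 * r)⁻¹ := inv_pos.mpr (by linarith)
  have hfinal : ∑' n, g n ≤ r + 9 * r ^ 2 + 192 * r ^ 3 := by
    nlinarith [hTle, pow_pos hrpos 3]
  nlinarith [hSbound, hfinal, hrpos, pow_pos hrpos 2, pow_pos hrpos 3, sq_nonneg r]
end
end

section
/- For every τ in the upper half-plane with Im τ ≥ 1.5, one has |χ(τ) − q^{−1}| < 7299 and |ξ(τ) − q^{−1}| < 7258, where q = e^{2πiτ}. -/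
open Complex

noncomputable section

lemma sigma'_le_s12 (k n : ℕ) : sigma' k (n + 1) ≤ (2 ^ (k + 1)) ^ n := by
  have h1 : sigma' k (n+1) ≤ (n+1) * (n+1)^k := by
    unfold sigma'
    calc ∑ d ∈ (n+1).divisors, d ^ k ≤ ∑ d ∈ (n+1).divisors, (n+1)^k :=
          Finset.sum_le_sum (fun d hd => Nat.pow_le_pow_left (Nat.divisor_le hd) k)
      _ = (n+1).divisors.card * (n+1)^k := by rw [Finset.sum_const, smul_eq_mul]
      _ ≤ (n+1) * (n+1)^k := by
          gcongr
          calc (n+1).divisors.card ≤ (Finset.Icc 1 (n+1)).card := by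
                apply Finset.card_le_card
                intro d hd
                exact Finset.mem_Icc.mpr ⟨Nat.pos_of_mem_divisors hd, Nat.divisor_le hd⟩
            _ = n + 1 := by simp
  have h2 : n + 1 ≤ 2 ^ n := Nat.lt_two_pow_self
  calc sigma' k (n+1) ≤ (n+1) * (n+1)^k := h1
    _ = (n+1)^(k+1) := by ring
    _ ≤ (2^n)^(k+1) := Nat.pow_le_pow_left h2 (k+1)
    _ = (2^(k+1))^n := by rw [← pow_mul, ← pow_mul, Nat.mul_comm]

lemma sigma_term_norm (k j n : ℕ) (q : ℂ) :
    ‖(sigma' k (n + j + 1) : ℂ) * q ^ (n + j + 1)‖ ≤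
      ((2:ℝ) ^ (k+1)) ^ j * ‖q‖ ^ (j+1) * ((2:ℝ) ^ (k+1) * ‖q‖) ^ n := by
  have hs : (sigma' k (n + j + 1) : ℝ) ≤ ((2:ℝ) ^ (k+1)) ^ (n + j) := by
    have := sigma'_le_s12 k (n + j)
    calc (sigma' k (n + j + 1) : ℝ) ≤ (((2 ^ (k + 1)) ^ (n + j) : ℕ) : ℝ) := by
          exact_mod_cast this
      _ = ((2:ℝ) ^ (k+1)) ^ (n + j) := by push_cast; ring
  have hq : 0 ≤ ‖q‖ := norm_nonneg q
  rw [norm_mul, norm_pow, Complex.norm_natCast]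
  calc (sigma' k (n + j + 1) : ℝ) * ‖q‖ ^ (n + j + 1)
      ≤ ((2:ℝ) ^ (k+1)) ^ (n + j) * ‖q‖ ^ (n + j + 1) := by gcongr
    _ = ((2:ℝ) ^ (k+1)) ^ j * ‖q‖ ^ (j+1) * ((2:ℝ) ^ (k+1) * ‖q‖) ^ n := by
        rw [mul_pow, pow_add, pow_add, pow_add]; ring

lemma summable_sigma (k j : ℕ) (q : ℂ) (h : (2:ℝ) ^ (k+1) * ‖q‖ < 1) :
    Summable (fun n : ℕ => (sigma' k (n + j + 1) : ℂ) * q ^ (n + j + 1)) := by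
  apply Summable.of_norm_bounded
    ((summable_geometric_of_lt_one (by positivity) h).mul_left
      (((2:ℝ) ^ (k+1)) ^ j * ‖q‖ ^ (j+1)))
  exact fun n => sigma_term_norm k j n q

lemma abs_tsum_sigma_le (k j : ℕ) (q : ℂ) (h : (2:ℝ) ^ (k+1) * ‖q‖ ≤ 1/2) :
    ‖∑' n : ℕ, (sigma' k (n + j + 1) : ℂ) * q ^ (n + j + 1)‖ ≤
      2 * ((2:ℝ) ^ (k+1)) ^ j * ‖q‖ ^ (j+1) := by
  have h1 : (2:ℝ) ^ (k+1) * ‖q‖ < 1 := lt_of_le_of_lt h (by norm_num)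
  have h0 : (0:ℝ) ≤ (2:ℝ) ^ (k+1) * ‖q‖ := by positivity
  set C := ((2:ℝ) ^ (k+1)) ^ j * ‖q‖ ^ (j+1) with hC
  have hC0 : 0 ≤ C := by positivity
  have hgeom : HasSum (fun n : ℕ => C * ((2:ℝ) ^ (k+1) * ‖q‖) ^ n)
      (C * (1 - (2:ℝ) ^ (k+1) * ‖q‖)⁻¹) :=
    (hasSum_geometric_of_lt_one h0 h1).mul_left C
  have hb := tsum_of_norm_bounded hgeom (fun n => sigma_term_norm k j n q)
  refine hb.trans ?_
  have hinv : (1 - (2:ℝ) ^ (k+1) * ‖q‖)⁻¹ ≤ 2 := by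
    rw [inv_le_comm₀ (by linarith) (by norm_num)]
    linarith
  calc C * (1 - (2:ℝ) ^ (k+1) * ‖q‖)⁻¹ ≤ C * 2 := by gcongr
    _ = 2 * ((2:ℝ) ^ (k+1)) ^ j * ‖q‖ ^ (j+1) := by rw [hC]; ring

lemma abs_add_le' {z w : ℂ} {p r : ℝ} (hz : ‖z‖ ≤ p) (hw : ‖w‖ ≤ r) :
    ‖z + w‖ ≤ p + r := (norm_add_le z w).trans (add_le_add hz hw)


lemma abs_neg_le {z : ℂ} {p : ℝ} (h : ‖z‖ ≤ p) : ‖-z‖ ≤ p := by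
  rwa [norm_neg]

lemma abs_add_ge (q R : ℂ) : ‖q‖ - ‖R‖ ≤ ‖q + R‖ := by
  have h := norm_add_le (q + R) (-R)
  simp only [add_neg_cancel_right, norm_neg] at h
  linarith

set_option maxHeartbeats 4000000 in
/-- For `Im τ ≥ 1.5`, `|χ(τ) - q⁻¹| < 7299` and `|ξ(τ) - q⁻¹| < 7258`. -/
theorem chi_xi_tail_bounds_medium (τ : ℂ) (hτ : 1.5 ≤ τ.im) :
    ‖χ' τ - (qpar τ)⁻¹‖ < 7299 ∧
    ‖ξ' τ - (qpar τ)⁻¹‖ < 7258 := by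
  simp only [χ', ξ', E2, E4, E6, Δ']
  set q := qpar τ with hqdef
  have hq0 : q ≠ 0 := Complex.exp_ne_zero _
  have hQ0 : 0 < ‖q‖ := norm_pos_iff.mpr hq0
  -- size of |q|
  have hq8 : ‖q‖ ≤ 1/8000 := by
    have hre : (2 * Real.pi * Complex.I * τ).re = -(2 * Real.pi * τ.im) := by
      simp [Complex.mul_re, Complex.mul_im]
    have h1 : ‖q‖ = Real.exp (-(2 * Real.pi * τ.im)) := by
      rw [hqdef, qpar, Complex.norm_exp, hre]
    rw [h1]
    have hpi : (3:ℝ) < Real.pi := Real.pi_gt_three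
    have h9 : (9:ℝ) ≤ 2 * Real.pi * τ.im := by nlinarith
    have h2 : Real.exp (-(2 * Real.pi * τ.im)) ≤ Real.exp (-9) :=
      Real.exp_le_exp.mpr (by linarith)
    refine h2.trans ?_
    have he : (2.7182818283 : ℝ) < Real.exp 1 := Real.exp_one_gt_d9
    have h3 : (8000:ℝ) < Real.exp 9 := by
      have h4 : ((2.7182818283 : ℝ))^9 < (Real.exp 1)^9 := by gcongr <;> norm_num
      rw [← Real.exp_nat_mul] at h4
      norm_num at h4 ⊢
      nlinarith
    rw [Real.exp_neg, inv_le_comm₀ (Real.exp_pos 9) (by norm_num)]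
    linarith
  have hQ3 : ‖q‖ ^ 3 ≤ (1/8000) * ‖q‖ ^ 2 := by nlinarith [sq_nonneg (‖q‖)]
  have hQsq : ‖q‖ ^ 2 ≤ 1/64000000 := by nlinarith
  -- smallness hypotheses for the series lemmas
  have h2a : (2:ℝ) ^ (1+1) * ‖q‖ ≤ 1/2 := by norm_num; linarith
  have h4a : (2:ℝ) ^ (3+1) * ‖q‖ ≤ 1/2 := by norm_num; linarith
  have h6a : (2:ℝ) ^ (5+1) * ‖q‖ ≤ 1/2 := by norm_num; linarith
  have h4a' : (2:ℝ) ^ (3+1) * ‖q‖ < 1 := lt_of_le_of_lt h4a (by norm_num)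
  have h6a' : (2:ℝ) ^ (5+1) * ‖q‖ < 1 := lt_of_le_of_lt h6a (by norm_num)
  -- the three series
  set a := ∑' n : ℕ, (sigma' 1 (n + 1) : ℂ) * q ^ (n + 1) with hadef
  set b := ∑' n : ℕ, (sigma' 3 (n + 1) : ℂ) * q ^ (n + 1) with hbdef
  set c := ∑' n : ℕ, (sigma' 5 (n + 1) : ℂ) * q ^ (n + 1) with hcdef
  have hA : ‖a‖ ≤ 2 * ‖q‖ := by
    have h := abs_tsum_sigma_le 1 0 q h2a
    norm_num at h
    exact h
  have hB : ‖b‖ ≤ 2 * ‖q‖ := by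
    have h := abs_tsum_sigma_le 3 0 q h4a
    norm_num at h
    exact h
  have hC : ‖c‖ ≤ 2 * ‖q‖ := by
    have h := abs_tsum_sigma_le 5 0 q h6a
    norm_num at h
    exact h
  -- split the first term off b and c
  have hsum3 : Summable (fun n : ℕ => (sigma' 3 (n + 1) : ℂ) * q ^ (n + 1)) :=
    summable_sigma 3 0 q h4a'
  have hsum5 : Summable (fun n : ℕ => (sigma' 5 (n + 1) : ℂ) * q ^ (n + 1)) :=
    summable_sigma 5 0 q h6a'
  have hb : b = q + ∑' n : ℕ, (sigma' 3 (n + 1 + 1) : ℂ) * q ^ (n + 1 + 1) := by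
    rw [hbdef, Summable.tsum_eq_zero_add hsum3]
    congr 1
    simp [sigma']
  have hc : c = q + ∑' n : ℕ, (sigma' 5 (n + 1 + 1) : ℂ) * q ^ (n + 1 + 1) := by
    rw [hcdef, Summable.tsum_eq_zero_add hsum5]
    congr 1
    simp [sigma']
  set T3 := ∑' n : ℕ, (sigma' 3 (n + 1 + 1) : ℂ) * q ^ (n + 1 + 1) with hT3def
  set T5 := ∑' n : ℕ, (sigma' 5 (n + 1 + 1) : ℂ) * q ^ (n + 1 + 1) with hT5def
  have hT3 : ‖T3‖ ≤ 32 * ‖q‖ ^ 2 := by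
    have h := abs_tsum_sigma_le 3 1 q h4a
    norm_num at h
    exact h
  have hT5 : ‖T5‖ ≤ 128 * ‖q‖ ^ 2 := by
    have h := abs_tsum_sigma_le 5 1 q h6a
    norm_num at h
    exact h

  clear_value a b c T3 T5 q
  -- abbreviation for |q|
  have hQa := norm_nonneg a
  have hQb := norm_nonneg b
  have hQc := norm_nonneg c
  -- monomial bounds
  have m1 : ‖24*(q*a)‖ ≤ 48 * ‖q‖^2 := by
    simp only [norm_mul, Complex.norm_ofNat]
    nlinarith [hA, hQ0.le]
  have m2 : ‖240*(q*b)‖ ≤ 480 * ‖q‖^2 := by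
    simp only [norm_mul, Complex.norm_ofNat]
    nlinarith [hB, hQ0.le]
  have m3 : ‖504*(q*c)‖ ≤ 1008 * ‖q‖^2 := by
    simp only [norm_mul, Complex.norm_ofNat]
    nlinarith [hC, hQ0.le]
  have m4 : ‖(5/12)*T3‖ ≤ 14 * ‖q‖^2 := by
    simp only [norm_mul, norm_div, Complex.norm_ofNat]
    linarith [hT3, pow_pos hQ0 2]
  have m5 : ‖(7/12)*T5‖ ≤ 75 * ‖q‖^2 := by
    simp only [norm_mul, norm_div, Complex.norm_ofNat]
    linarith [hT5, pow_pos hQ0 2]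
  have hab : ‖a‖ * ‖b‖ ≤ 4 * ‖q‖^2 :=
    le_of_le_of_eq (mul_le_mul hA hB hQb (by linarith)) (by ring)
  have hac : ‖a‖ * ‖c‖ ≤ 4 * ‖q‖^2 :=
    le_of_le_of_eq (mul_le_mul hA hC hQc (by linarith)) (by ring)
  have hbc : ‖b‖ * ‖c‖ ≤ 4 * ‖q‖^2 :=
    le_of_le_of_eq (mul_le_mul hB hC hQc (by linarith)) (by ring)
  have m6 : ‖5760*(q*(a*b))‖ ≤ 3 * ‖q‖^2 := by
    simp only [norm_mul, Complex.norm_ofNat]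
    nlinarith [mul_le_mul_of_nonneg_left hab hQ0.le, hQ3, pow_pos hQ0 2]
  have m7 : ‖12096*(q*(a*c))‖ ≤ 7 * ‖q‖^2 := by
    simp only [norm_mul, Complex.norm_ofNat]
    nlinarith [mul_le_mul_of_nonneg_left hac hQ0.le, hQ3, pow_pos hQ0 2]
  have m8 : ‖120960*(q*(b*c))‖ ≤ 61 * ‖q‖^2 := by
    simp only [norm_mul, Complex.norm_ofNat]
    nlinarith [mul_le_mul_of_nonneg_left hbc hQ0.le, hQ3, pow_pos hQ0 2]
  have habc : ‖a‖ * (‖b‖ * ‖c‖) ≤ 8 * ‖q‖^3 := by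
    have h := mul_le_mul hA hbc (mul_nonneg hQb hQc) (by linarith)
    nlinarith [h]
  have hQ4 : ‖q‖ ^ 4 ≤ (1/64000000) * ‖q‖ ^ 2 := by
    nlinarith [hQsq, sq_nonneg (‖q‖)]
  have m9 : ‖2903040*(q*(a*(b*c)))‖ ≤ 1 * ‖q‖^2 := by
    simp only [norm_mul, Complex.norm_ofNat]
    nlinarith [mul_le_mul_of_nonneg_left habc hQ0.le, hQ4]
  have hb2 : ‖b‖ ^ 2 ≤ 4 * ‖q‖^2 := by
    have := mul_le_mul hB hB hQb (by linarith)
    nlinarith [this]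
  have hc2 : ‖c‖ ^ 2 ≤ 4 * ‖q‖^2 := by
    have := mul_le_mul hC hC hQc (by linarith)
    nlinarith [this]
  have m10 : ‖100*b^2‖ ≤ 400 * ‖q‖^2 := by
    simp only [norm_mul, norm_pow, Complex.norm_ofNat]
    linarith [hb2, pow_pos hQ0 2]
  have hb3 : ‖b‖ ^ 3 ≤ 8 * ‖q‖^3 := by
    have h := mul_le_mul hB hb2 (sq_nonneg _) (by linarith)
    nlinarith [h]
  have m11 : ‖8000*b^3‖ ≤ 8 * ‖q‖^2 := by
    simp only [norm_mul, norm_pow, Complex.norm_ofNat]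
    linarith [hb3, hQ3, pow_pos hQ0 2, pow_pos hQ0 3]
  have m12 : ‖147*c^2‖ ≤ 588 * ‖q‖^2 := by
    simp only [norm_mul, norm_pow, Complex.norm_ofNat]
    linarith [hc2, pow_pos hQ0 2]
  -- the denominator
  set D := ((1 + 240 * b) ^ 3 - (1 - 504 * c) ^ 2) / 1728 with hDdef
  clear_value D
  have hDval : D = q + ((5/12)*T3 + (7/12)*T5 + (100*b^2 + 8000*b^3 + -(147*c^2))) := by
    rw [hDdef, hb, hc]; ring
  have hRabs : ‖(5/12)*T3 + (7/12)*T5 + (100*b^2 + 8000*b^3 + -(147*c^2))‖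
      ≤ 1085 * ‖q‖^2 := by
    refine le_trans (abs_add_le' (abs_add_le' m4 m5)
      (abs_add_le' (abs_add_le' m10 m11) (abs_neg_le m12))) ?_
    exact le_of_eq (by ring)
  have hDabs : ‖q‖ - 1085 * ‖q‖^2 ≤ ‖D‖ := by
    rw [hDval]
    have h' := abs_add_ge q ((5/12)*T3 + (7/12)*T5 + (100*b^2 + 8000*b^3 + -(147*c^2)))
    linarith [hRabs]
  have hDpos : 0 < ‖D‖ := by nlinarith [hDabs, hQ0, hq8]
  have hD0 : D ≠ 0 := norm_pos_iff.mp hDpos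
  have hQD : ‖q‖^2 - 1085 * ‖q‖^3 ≤ ‖q‖ * ‖D‖ := by
    nlinarith [hDabs, hQ0.le]
  constructor
  · -- χ bound
    have hquot : (1 - 24 * a) * (1 + 240 * b) * (1 - 504 * c) / D - q⁻¹
        = (q * ((1 - 24 * a) * (1 + 240 * b) * (1 - 504 * c)) - D) / (q * D) := by
      field_simp
    rw [hquot]
    have hNval : q * ((1 - 24 * a) * (1 + 240 * b) * (1 - 504 * c)) - D =
        -(24*(q*a)) + 240*(q*b) + -(504*(q*c)) + -((5/12)*T3) + -((7/12)*T5)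
        + -(5760*(q*(a*b))) + 12096*(q*(a*c)) + -(120960*(q*(b*c))) + 2903040*(q*(a*(b*c)))
        + -(100*b^2) + -(8000*b^3) + 147*c^2 := by
      rw [hDdef, hb, hc]; ring
    rw [hNval, norm_div, norm_mul]
    have hNabs : ‖-(24*(q*a)) + 240*(q*b) + -(504*(q*c)) + -((5/12)*T3)
        + -((7/12)*T5) + -(5760*(q*(a*b))) + 12096*(q*(a*c)) + -(120960*(q*(b*c)))
        + 2903040*(q*(a*(b*c))) + -(100*b^2) + -(8000*b^3) + 147*c^2‖
        ≤ 2693 * ‖q‖^2 := by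
      refine le_trans (abs_add_le' (abs_add_le' (abs_add_le' (abs_add_le' (abs_add_le'
        (abs_add_le' (abs_add_le' (abs_add_le' (abs_add_le' (abs_add_le' (abs_add_le'
        (abs_neg_le m1) m2) (abs_neg_le m3)) (abs_neg_le m4)) (abs_neg_le m5))
        (abs_neg_le m6)) m7) (abs_neg_le m8)) m9) (abs_neg_le m10)) (abs_neg_le m11)) m12) ?_
      exact le_of_eq (by ring)
    rw [div_lt_iff₀ (mul_pos hQ0 hDpos)]
    linarith [hNabs, hQD, hQ3, pow_pos hQ0 2]
  · -- ξ bound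
    have hquot : (1 + 240 * b) * (1 - 504 * c) / D - q⁻¹
        = (q * ((1 + 240 * b) * (1 - 504 * c)) - D) / (q * D) := by
      field_simp
    rw [hquot]
    have hNval : q * ((1 + 240 * b) * (1 - 504 * c)) - D =
        240*(q*b) + -(504*(q*c)) + -(120960*(q*(b*c))) + -((5/12)*T3) + -((7/12)*T5)
        + -(100*b^2) + -(8000*b^3) + 147*c^2 := by
      rw [hDdef, hb, hc]; ring
    rw [hNval, norm_div, norm_mul]
    have hNabs : ‖240*(q*b) + -(504*(q*c)) + -(120960*(q*(b*c))) + -((5/12)*T3)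
        + -((7/12)*T5) + -(100*b^2) + -(8000*b^3) + 147*c^2‖
        ≤ 2634 * ‖q‖^2 := by
      refine le_trans (abs_add_le' (abs_add_le' (abs_add_le' (abs_add_le' (abs_add_le'
        (abs_add_le' (abs_add_le' m2 (abs_neg_le m3)) (abs_neg_le m8)) (abs_neg_le m4))
        (abs_neg_le m5)) (abs_neg_le m10)) (abs_neg_le m11)) m12) ?_
      exact le_of_eq (by ring)
    rw [div_lt_iff₀ (mul_pos hQ0 hDpos)]
    linarith [hNabs, hQD, hQ3, pow_pos hQ0 2]
end
end

section
/- For every τ in the upper half-plane with Im τ ≥ √3/2, one has |q/Δ(τ)| < 1.5, where q = e^{2πiτ}; in particular Δ(τ) ≠ 0 there. -/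
open Complex

noncomputable section

lemma sigma'_le_pow (k n : ℕ) : sigma' k n ≤ n ^ (k + 1) := by
  have h1 : n.divisors ⊆ Finset.Icc 1 n := by
    intro d hd
    rcases Nat.mem_divisors.1 hd with ⟨hdvd, hn⟩
    have hd0 : d ≠ 0 := by rintro rfl; exact hn (Nat.eq_zero_of_zero_dvd hdvd)
    exact Finset.mem_Icc.2 ⟨Nat.one_le_iff_ne_zero.2 hd0,
      Nat.le_of_dvd (Nat.pos_of_ne_zero hn) hdvd⟩
  calc sigma' k n ≤ ∑ d ∈ Finset.Icc 1 n, d ^ k := Finset.sum_le_sum_of_subset h1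
    _ ≤ ∑ _d ∈ Finset.Icc 1 n, n ^ k := Finset.sum_le_sum fun d hd =>
        Nat.pow_le_pow_left (Finset.mem_Icc.1 hd).2 k
    _ ≤ n * n ^ k := by
        rw [Finset.sum_const, Nat.card_Icc]
        simp [smul_eq_mul]
    _ = n ^ (k + 1) := by ring

lemma sq_le_two_pow {n : ℕ} (h : 4 ≤ n) : n ^ 2 ≤ 2 ^ n := by
  induction n, h using Nat.le_induction with
  | base => norm_num
  | succ n hn ih =>
      have h1 : 2 * n + 1 ≤ n ^ 2 := by nlinarith
      calc (n + 1) ^ 2 = n ^ 2 + (2 * n + 1) := by ring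
        _ ≤ n ^ 2 + n ^ 2 := by omega
        _ ≤ 2 ^ n + 2 ^ n := by omega
        _ = 2 ^ (n + 1) := by ring

lemma sigma3_le (n : ℕ) : sigma' 3 n ≤ 4 ^ n := by
  rcases lt_or_ge n 4 with h | h
  · interval_cases n <;> decide
  · calc sigma' 3 n ≤ n ^ 4 := sigma'_le_pow 3 n
      _ = (n ^ 2) ^ 2 := by ring
      _ ≤ (2 ^ n) ^ 2 := Nat.pow_le_pow_left (sq_le_two_pow h) 2
      _ = 4 ^ n := by rw [← pow_mul, mul_comm n 2, pow_mul]; norm_num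

lemma sigma5_le (n : ℕ) : sigma' 5 n ≤ 8 ^ n := by
  rcases lt_or_ge n 4 with h | h
  · interval_cases n <;> decide
  · calc sigma' 5 n ≤ n ^ 6 := sigma'_le_pow 5 n
      _ = (n ^ 2) ^ 3 := by ring
      _ ≤ (2 ^ n) ^ 3 := Nat.pow_le_pow_left (sq_le_two_pow h) 3
      _ = 8 ^ n := by rw [← pow_mul, mul_comm n 3, pow_mul]; norm_num

lemma term_norm_le {f : ℕ → ℕ} {c : ℕ} (hf : ∀ n, f n ≤ c ^ n) (q : ℂ) (n : ℕ) :
    ‖(f n : ℂ) * q ^ n‖ ≤ ((c : ℝ) * ‖q‖) ^ n := by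
  rw [mul_pow]
  calc ‖(f n : ℂ) * q ^ n‖ = (f n : ℝ) * ‖q‖ ^ n := by
        simp [norm_mul, norm_pow, Complex.norm_natCast]
    _ ≤ (c : ℝ) ^ n * ‖q‖ ^ n := by
        have h1 : (f n : ℝ) ≤ (c : ℝ) ^ n := by exact_mod_cast hf n
        exact mul_le_mul_of_nonneg_right h1 (pow_nonneg (norm_nonneg q) _)

lemma summable_aux {f : ℕ → ℕ} {c : ℕ} (hf : ∀ n, f n ≤ c ^ n) {q : ℂ}
    (hx : (c : ℝ) * ‖q‖ < 1) :
    Summable (fun n : ℕ => (f (n + 1) : ℂ) * q ^ (n + 1)) := by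
  have hx0 : 0 ≤ (c : ℝ) * ‖q‖ :=
    mul_nonneg (Nat.cast_nonneg c) (norm_nonneg q)
  refine Summable.of_norm_bounded (g := fun n => ((c : ℝ) * ‖q‖) ^ (n + 1)) ?_ ?_
  · simpa [pow_succ, mul_comm] using
      (summable_geometric_of_lt_one hx0 hx).mul_left ((c : ℝ) * ‖q‖)
  · exact fun n => term_norm_le hf q (n + 1)

lemma tail_abs_le {f : ℕ → ℕ} {c : ℕ} (hf : ∀ n, f n ≤ c ^ n) {q : ℂ}
    (hx : (c : ℝ) * ‖q‖ < 1) :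
    ‖∑' n : ℕ, (f (n + 4) : ℂ) * q ^ (n + 4)‖ ≤
      ((c : ℝ) * ‖q‖) ^ 4 / (1 - (c : ℝ) * ‖q‖) := by
  have hx0 : 0 ≤ (c : ℝ) * ‖q‖ :=
    mul_nonneg (Nat.cast_nonneg c) (norm_nonneg q)
  set x := (c : ℝ) * ‖q‖ with hxdef
  have hgeo : HasSum (fun n : ℕ => x ^ 4 * x ^ n) (x ^ 4 * (1 - x)⁻¹) :=
    (hasSum_geometric_of_lt_one hx0 hx).mul_left _
  have hgeo' : HasSum (fun n : ℕ => x ^ (n + 4)) (x ^ 4 / (1 - x)) := by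
    simpa [pow_add, div_eq_mul_inv, mul_comm] using hgeo
  exact tsum_of_norm_bounded hgeo' fun n => term_norm_le hf q (n + 4)

lemma split4 {f : ℕ → ℕ} {c : ℕ} (hf : ∀ n, f n ≤ c ^ n) {q : ℂ}
    (hx : (c : ℝ) * ‖q‖ < 1) :
    (∑' n : ℕ, (f (n + 1) : ℂ) * q ^ (n + 1)) =
      ((f 1 : ℂ) * q + (f 2 : ℂ) * q ^ 2 + (f 3 : ℂ) * q ^ 3) +
        ∑' n : ℕ, (f (n + 4) : ℂ) * q ^ (n + 4) := by
  have h := (Summable.sum_add_tsum_nat_add 3 (summable_aux hf hx)).symm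
  rw [h, Finset.sum_range_succ, Finset.sum_range_succ, Finset.sum_range_one]
  norm_num

lemma abs_add6 (a b c d e f : ℂ) :
    ‖a + b + c + d + e + f‖ ≤ ‖a‖ + ‖b‖ +
      ‖c‖ + ‖d‖ + ‖e‖ + ‖f‖ := by
  have h5 := norm_add_le (a + b + c + d + e) f
  have h4 := norm_add_le (a + b + c + d) e
  have h3 := norm_add_le (a + b + c) d
  have h2 := norm_add_le (a + b) c
  have h1 := norm_add_le a b
  linarith

lemma abs_add5_sub (a b c d e f : ℂ) :
    ‖a + b + c + d + e - f‖ ≤ ‖a‖ + ‖b‖ +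
      ‖c‖ + ‖d‖ + ‖e‖ + ‖f‖ := by
  have h0 : a + b + c + d + e - f = a + b + c + d + e + (-f) := by ring
  have := abs_add6 a b c d e (-f)
  rw [norm_neg] at this
  rw [h0]; exact this

lemma abs_qpar_le (τ : ℂ) (hτ : Real.sqrt 3 / 2 ≤ τ.im) :
    ‖qpar τ‖ ≤ 11 / 2000 := by
  have hre : (2 * (Real.pi : ℂ) * Complex.I * τ).re = -(2 * Real.pi * τ.im) := by
    simp [Complex.mul_re, Complex.mul_im]
  have h1 : ‖qpar τ‖ = Real.exp (-(2 * Real.pi * τ.im)) := by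
    rw [qpar, Complex.norm_exp, hre]
  rw [h1]
  have hs3 : (1.732 : ℝ) ≤ Real.sqrt 3 := by
    nlinarith [Real.sq_sqrt (show (0:ℝ) ≤ 3 by norm_num), Real.sqrt_nonneg 3]
  have hπ : (3.1415 : ℝ) ≤ Real.pi := Real.pi_gt_d4.le
  have him : (0.866 : ℝ) ≤ τ.im := by
    calc (0.866 : ℝ) = 1.732 / 2 := by norm_num
      _ ≤ Real.sqrt 3 / 2 := by linarith
      _ ≤ τ.im := hτ
  have h544 : (5.44 : ℝ) ≤ 2 * Real.pi * τ.im := by nlinarith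
  have hexp : (2000 / 11 : ℝ) ≤ Real.exp 5.44 := by
    have h1' : Real.exp (5.44 : ℝ) = Real.exp 1 ^ 5 * Real.exp 0.44 := by
      rw [← Real.exp_nat_mul, ← Real.exp_add]; norm_num
    have h2 : (2.7182818283 : ℝ) < Real.exp 1 := Real.exp_one_gt_d9
    have h3 : (1.44 : ℝ) ≤ Real.exp 0.44 := by
      have := Real.add_one_le_exp (0.44 : ℝ); linarith
    have h4 : (148.41 : ℝ) ≤ Real.exp 1 ^ 5 := by
      calc (148.41 : ℝ) ≤ 2.7182818283 ^ 5 := by norm_num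
        _ ≤ Real.exp 1 ^ 5 := pow_le_pow_left₀ (by norm_num) h2.le 5
    calc (2000 / 11 : ℝ) ≤ 148.41 * 1.44 := by norm_num
      _ ≤ Real.exp 1 ^ 5 * Real.exp 0.44 :=
          mul_le_mul h4 h3 (by norm_num) (by positivity)
      _ = Real.exp 5.44 := h1'.symm
  calc Real.exp (-(2 * Real.pi * τ.im)) ≤ Real.exp (-(5.44 : ℝ)) :=
        Real.exp_le_exp.2 (by linarith)
    _ ≤ 11 / 2000 := by
        rw [Real.exp_neg]
        rw [show (11 / 2000 : ℝ) = (2000 / 11 : ℝ)⁻¹ by norm_num]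
        exact inv_anti₀ (by norm_num) hexp


set_option maxHeartbeats 2000000 in
/-- For `Im τ ≥ √3/2`, `|q/Δ(τ)| < 1.5`; in particular `Δ(τ) ≠ 0`. -/
theorem q_over_disc_bound (τ : ℂ) (hτ : Real.sqrt 3 / 2 ≤ τ.im) :
    ‖qpar τ / Δ' τ‖ < 1.5 ∧ Δ' τ ≠ 0 := by
  have hq0 : qpar τ ≠ 0 := Complex.exp_ne_zero _
  set q : ℂ := qpar τ with hqdef
  set r : ℝ := ‖q‖ with hrdef
  have hr0 : 0 < r := norm_pos_iff.mpr hq0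
  have hrR : r ≤ 11 / 2000 := abs_qpar_le τ hτ
  clear_value q r
  have hp2 : r ^ 2 ≤ 11 / 2000 * r := by nlinarith
  have hp3 : r ^ 3 ≤ 11 / 2000 * r ^ 2 := by nlinarith [sq_nonneg r]
  have hp4 : r ^ 4 ≤ 11 / 2000 * r ^ 3 := by nlinarith [pow_nonneg hr0.le 3]
  have hp5 : r ^ 5 ≤ 11 / 2000 * r ^ 4 := by nlinarith [pow_nonneg hr0.le 4]
  have hp6 : r ^ 6 ≤ 11 / 2000 * r ^ 5 := by nlinarith [pow_nonneg hr0.le 5]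
  have hc4 : ((4 : ℕ) : ℝ) * ‖q‖ < 1 := by rw [← hrdef]; push_cast; linarith
  have hc8 : ((8 : ℕ) : ℝ) * ‖q‖ < 1 := by rw [← hrdef]; push_cast; linarith
  -- series splitting
  set A : ℂ := ∑' n : ℕ, (sigma' 3 (n + 1) : ℂ) * q ^ (n + 1) with hAdef
  set B : ℂ := ∑' n : ℕ, (sigma' 5 (n + 1) : ℂ) * q ^ (n + 1) with hBdef
  set u : ℂ := ∑' n : ℕ, (sigma' 3 (n + 4) : ℂ) * q ^ (n + 4) with hudef
  set v : ℂ := ∑' n : ℕ, (sigma' 5 (n + 4) : ℂ) * q ^ (n + 4) with hvdef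
  clear_value A B u v
  have hAsplit : A = (q + 9 * q ^ 2 + 28 * q ^ 3) + u := by
    rw [hAdef, hudef, split4 sigma3_le hc4]
    norm_num [show sigma' 3 1 = 1 from by decide, show sigma' 3 2 = 9 from by decide,
      show sigma' 3 3 = 28 from by decide]
  have hBsplit : B = (q + 33 * q ^ 2 + 244 * q ^ 3) + v := by
    rw [hBdef, hvdef, split4 sigma5_le hc8]
    norm_num [show sigma' 5 1 = 1 from by decide, show sigma' 5 2 = 33 from by decide,
      show sigma' 5 3 = 244 from by decide]
  -- tail bounds
  have hu' : ‖u‖ ≤ 264 * r ^ 4 := by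
    rw [hudef]
    refine (tail_abs_le sigma3_le hc4).trans ?_
    rw [← hrdef]
    push_cast
    rw [div_le_iff₀ (by linarith : (0:ℝ) < 1 - 4 * r)]
    nlinarith [pow_nonneg hr0.le 4, pow_nonneg hr0.le 5]
  have hv' : ‖v‖ ≤ 4300 * r ^ 4 := by
    rw [hvdef]
    refine (tail_abs_le sigma5_le hc8).trans ?_
    rw [← hrdef]
    push_cast
    rw [div_le_iff₀ (by linarith : (0:ℝ) < 1 - 8 * r)]
    nlinarith [pow_nonneg hr0.le 4, pow_nonneg hr0.le 5]
  -- abs bounds for A, B and the cubic approximants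
  have habspow : ∀ k : ℕ, ‖q ^ k‖ = r ^ k := fun k => by rw [norm_pow, hrdef]
  have hA0 : ‖q + 9 * q ^ 2 + 28 * q ^ 3‖ ≤ r + 9 * r ^ 2 + 28 * r ^ 3 := by
    have h1 := norm_add_le (q + 9 * q ^ 2) (28 * q ^ 3)
    have h2 := norm_add_le q (9 * q ^ 2)
    have e1 : ‖9 * q ^ 2‖ = 9 * r ^ 2 := by
      rw [norm_mul, norm_pow, Complex.norm_ofNat, hrdef]
    have e2 : ‖28 * q ^ 3‖ = 28 * r ^ 3 := by
      rw [norm_mul, norm_pow, Complex.norm_ofNat, hrdef]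
    rw [e1] at h2; rw [e2] at h1
    linarith
  have hB0 : ‖q + 33 * q ^ 2 + 244 * q ^ 3‖ ≤ r + 33 * r ^ 2 + 244 * r ^ 3 := by
    have h1 := norm_add_le (q + 33 * q ^ 2) (244 * q ^ 3)
    have h2 := norm_add_le q (33 * q ^ 2)
    have e1 : ‖33 * q ^ 2‖ = 33 * r ^ 2 := by
      rw [norm_mul, norm_pow, Complex.norm_ofNat, hrdef]
    have e2 : ‖244 * q ^ 3‖ = 244 * r ^ 3 := by
      rw [norm_mul, norm_pow, Complex.norm_ofNat, hrdef]
    rw [e1] at h2; rw [e2] at h1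
    linarith
  have hA0le : ‖q + 9 * q ^ 2 + 28 * q ^ 3‖ ≤ 1.06 * r := by
    refine hA0.trans ?_; linarith
  have hB0le : ‖q + 33 * q ^ 2 + 244 * q ^ 3‖ ≤ 1.2 * r := by
    refine hB0.trans ?_; linarith
  have hAle : ‖A‖ ≤ 1.06 * r := by
    rw [hAsplit]
    refine (norm_add_le _ _).trans ?_
    have := hu'
    have h264 : (264 : ℝ) * r ^ 4 ≤ 264 * ((11/2000) * ((11/2000) * ((11/2000) * r))) := by
      nlinarith [pow_nonneg hr0.le 2, pow_nonneg hr0.le 3]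
    refine le_trans (add_le_add hA0 hu') ?_
    linarith
  have hBle : ‖B‖ ≤ 1.2 * r := by
    rw [hBsplit]
    refine (norm_add_le _ _).trans ?_
    refine le_trans (add_le_add hB0 hv') ?_
    nlinarith [pow_nonneg hr0.le 2, pow_nonneg hr0.le 3]
  -- key algebraic identity
  have hE4 : E4 τ = 1 + 240 * A := by rw [E4, hAdef, hqdef]
  have hE6 : E6 τ = 1 - 504 * B := by rw [E6, hBdef, hqdef]
  have hΔeq : (1728 : ℂ) * Δ' τ =
      720 * A + 172800 * A ^ 2 + 13824000 * A ^ 3 + 1008 * B - 254016 * B ^ 2 := by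
    rw [Δ', hE4, hE6]; ring
  have hkey : (1728 : ℂ) * Δ' τ - 1728 * (q - 24 * q ^ 2 + 252 * q ^ 3) =
      q ^ 4 * (-3661632 + 516865536 * q + 15991962624 * q ^ 2 + 126572544000 * q ^ 3 +
          292626432000 * q ^ 4 + 303464448000 * q ^ 5)
      + 720 * u
      + 172800 * (u * (A + (q + 9 * q ^ 2 + 28 * q ^ 3)))
      + 13824000 * (u * (A ^ 2 + A * (q + 9 * q ^ 2 + 28 * q ^ 3) +
          (q + 9 * q ^ 2 + 28 * q ^ 3) ^ 2))
      + 1008 * v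
      - 254016 * (v * (B + (q + 33 * q ^ 2 + 244 * q ^ 3))) := by
    rw [hΔeq, hAsplit, hBsplit]; ring
  -- bound each term
  have hT0 : ‖q ^ 4 * (-3661632 + 516865536 * q + 15991962624 * q ^ 2 +
      126572544000 * q ^ 3 + 292626432000 * q ^ 4 + 303464448000 * q ^ 5)‖ ≤
      7100000 * r ^ 4 := by
    rw [norm_mul, habspow 4]
    have hP : ‖-3661632 + 516865536 * q + 15991962624 * q ^ 2 +
        126572544000 * q ^ 3 + 292626432000 * q ^ 4 + 303464448000 * q ^ 5‖ ≤ 7100000 := by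
      refine (abs_add6 _ _ _ _ _ _).trans ?_
      have e0 : ‖(-3661632 : ℂ)‖ = 3661632 := by
        rw [norm_neg, Complex.norm_ofNat]
      have e1 : ‖516865536 * q‖ = 516865536 * r := by
        rw [norm_mul, Complex.norm_ofNat, hrdef]
      have e2 : ‖15991962624 * q ^ 2‖ = 15991962624 * r ^ 2 := by
        rw [norm_mul, norm_pow, Complex.norm_ofNat, hrdef]
      have e3 : ‖126572544000 * q ^ 3‖ = 126572544000 * r ^ 3 := by
        rw [norm_mul, norm_pow, Complex.norm_ofNat, hrdef]
      have e4 : ‖292626432000 * q ^ 4‖ = 292626432000 * r ^ 4 := by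
        rw [norm_mul, norm_pow, Complex.norm_ofNat, hrdef]
      have e5 : ‖303464448000 * q ^ 5‖ = 303464448000 * r ^ 5 := by
        rw [norm_mul, norm_pow, Complex.norm_ofNat, hrdef]
      rw [e0, e1, e2, e3, e4, e5]
      linarith
    calc r ^ 4 * ‖-3661632 + 516865536 * q + 15991962624 * q ^ 2 +
        126572544000 * q ^ 3 + 292626432000 * q ^ 4 + 303464448000 * q ^ 5‖ ≤
        r ^ 4 * 7100000 := by
          exact mul_le_mul_of_nonneg_left hP (pow_nonneg hr0.le 4)
      _ = 7100000 * r ^ 4 := by ring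
  have hT1 : ‖720 * u‖ ≤ 190080 * r ^ 4 := by
    rw [norm_mul]
    have : ‖(720 : ℂ)‖ = 720 := Complex.norm_ofNat 720
    rw [this]; linarith
  have hT2 : ‖172800 * (u * (A + (q + 9 * q ^ 2 + 28 * q ^ 3)))‖ ≤
      172800 * (264 * r ^ 4 * (2.2 * r)) := by
    rw [norm_mul, norm_mul]
    have : ‖(172800 : ℂ)‖ = 172800 := Complex.norm_ofNat 172800
    rw [this]
    gcongr
    refine (norm_add_le _ _).trans ?_
    linarith
  have hT3 : ‖13824000 * (u * (A ^ 2 + A * (q + 9 * q ^ 2 + 28 * q ^ 3) +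
      (q + 9 * q ^ 2 + 28 * q ^ 3) ^ 2))‖ ≤ 13824000 * (264 * r ^ 4 * (3.38 * r ^ 2)) := by
    rw [norm_mul, norm_mul]
    have : ‖(13824000 : ℂ)‖ = 13824000 := Complex.norm_ofNat 13824000
    rw [this]
    gcongr
    have h1 : ‖A ^ 2‖ ≤ (1.06 * r) ^ 2 := by
      rw [norm_pow]; exact pow_le_pow_left₀ (norm_nonneg _) hAle 2
    have h2 : ‖A * (q + 9 * q ^ 2 + 28 * q ^ 3)‖ ≤ (1.06 * r) * (1.06 * r) := by
      rw [norm_mul]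
      exact mul_le_mul hAle hA0le (norm_nonneg _) (by positivity)
    have h3 : ‖(q + 9 * q ^ 2 + 28 * q ^ 3) ^ 2‖ ≤ (1.06 * r) ^ 2 := by
      rw [norm_pow]; exact pow_le_pow_left₀ (norm_nonneg _) hA0le 2
    have htr := norm_add_le (A ^ 2 + A * (q + 9 * q ^ 2 + 28 * q ^ 3))
      ((q + 9 * q ^ 2 + 28 * q ^ 3) ^ 2)
    have htr2 := norm_add_le (A ^ 2) (A * (q + 9 * q ^ 2 + 28 * q ^ 3))
    nlinarith [sq_nonneg r, hr0.le]
  have hT4 : ‖1008 * v‖ ≤ 4334400 * r ^ 4 := by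
    rw [norm_mul]
    have : ‖(1008 : ℂ)‖ = 1008 := Complex.norm_ofNat 1008
    rw [this]; linarith
  have hT5 : ‖254016 * (v * (B + (q + 33 * q ^ 2 + 244 * q ^ 3)))‖ ≤
      254016 * (4300 * r ^ 4 * (2.4 * r)) := by
    rw [norm_mul, norm_mul]
    have : ‖(254016 : ℂ)‖ = 254016 := Complex.norm_ofNat 254016
    rw [this]
    gcongr
    refine (norm_add_le _ _).trans ?_
    linarith
  -- total bound on D
  have hD : ‖(1728 : ℂ) * Δ' τ - 1728 * (q - 24 * q ^ 2 + 252 * q ^ 3)‖ ≤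
      28000000 * r ^ 4 := by
    rw [hkey]
    refine (abs_add5_sub _ _ _ _ _ _).trans ?_
    have c2 : 172800 * (264 * r ^ 4 * (2.2 * r)) ≤ 560000 * r ^ 4 := by
      have e : (172800 : ℝ) * (264 * r ^ 4 * (2.2 * r)) = 100362240 * r ^ 5 := by ring
      rw [e]; linarith [pow_nonneg hr0.le 4]
    have c3 : 13824000 * (264 * r ^ 4 * (3.38 * r ^ 2)) ≤ 380000 * r ^ 4 := by
      have e : (13824000 : ℝ) * (264 * r ^ 4 * (3.38 * r ^ 2)) = 12335431680 * r ^ 6 := by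
        ring
      rw [e]; linarith [pow_nonneg hr0.le 4, pow_nonneg hr0.le 5]
    have c5 : 254016 * (4300 * r ^ 4 * (2.4 * r)) ≤ 14450000 * r ^ 4 := by
      have e : (254016 : ℝ) * (4300 * r ^ 4 * (2.4 * r)) = 2621445120 * r ^ 5 := by ring
      rw [e]; linarith [pow_nonneg hr0.le 4]
    linarith [pow_nonneg hr0.le 4]
  -- triangle to 1728 q
  have htri : ‖(1728 : ℂ) * Δ' τ - 1728 * q‖ ≤ 248 * r := by
    have hsplit : (1728 : ℂ) * Δ' τ - 1728 * q =
        ((1728 : ℂ) * Δ' τ - 1728 * (q - 24 * q ^ 2 + 252 * q ^ 3)) +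
          (-41472 * q ^ 2 + 435456 * q ^ 3) := by ring
    rw [hsplit]
    refine (norm_add_le _ _).trans ?_
    have h2 : ‖-41472 * q ^ 2 + 435456 * q ^ 3‖ ≤
        41472 * r ^ 2 + 435456 * r ^ 3 := by
      refine (norm_add_le _ _).trans ?_
      have e1 : ‖-41472 * q ^ 2‖ = 41472 * r ^ 2 := by
        rw [show ((-41472 : ℂ)) = -(41472:ℂ) by norm_num, norm_mul, norm_pow,
          norm_neg, Complex.norm_ofNat, hrdef]
      have e2 : ‖435456 * q ^ 3‖ = 435456 * r ^ 3 := by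
        rw [norm_mul, norm_pow, Complex.norm_ofNat, hrdef]
      rw [e1, e2]
    have h4 : (28000000 : ℝ) * r ^ 4 ≤ 5 * r := by
      nlinarith [pow_nonneg hr0.le 2, pow_nonneg hr0.le 3]
    have h5 : (41472 : ℝ) * r ^ 2 ≤ 229 * r := by nlinarith
    have h6 : (435456 : ℝ) * r ^ 3 ≤ 14 * r := by
      nlinarith [pow_nonneg hr0.le 2]
    linarith
  -- lower bound on |1728 Δ'|
  have habs1728q : ‖(1728 : ℂ) * q‖ = 1728 * r := by
    rw [norm_mul, Complex.norm_ofNat, hrdef]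
  have hlow : 1480 * r ≤ ‖(1728 : ℂ) * Δ' τ‖ := by
    have h := norm_sub_norm_le ((1728 : ℂ) * q) ((1728 : ℂ) * Δ' τ)
    rw [norm_sub_rev] at h
    rw [habs1728q] at h
    linarith
  have habsΔ : 1480 / 1728 * r ≤ ‖Δ' τ‖ := by
    have h : ‖(1728 : ℂ) * Δ' τ‖ = 1728 * ‖Δ' τ‖ := by
      rw [norm_mul, Complex.norm_ofNat]
    rw [h] at hlow
    linarith
  have hΔne : Δ' τ ≠ 0 := by
    intro h
    rw [h] at habsΔ
    simp only [norm_zero] at habsΔ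
    nlinarith
  refine ⟨?_, hΔne⟩
  rw [norm_div]
  rw [div_lt_iff₀ (norm_pos_iff.mpr hΔne)]
  rw [← hrdef]
  nlinarith [habsΔ, hr0]
end
end
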